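/- Sufficiency direction of the main proposition: let G^h be the incidence matrix of the fine digraph, α an N^h × N^H matrix with rows summing to 1 and with α_{pn} = 0 for p ∉ L_n, and G^H the incidence matrix of a coarse digraph. Suppose for every fine edge i = (p,q) the induced subgraph of the coarse graph on the vertex set C̃_i = L̃_p ∪ L̃_q is connected. Then there exists an E^h × E^H matrix β with β_{ie} = 0 for e ∉ Ĩ_i and G^h α = β G^H. -/

import Mathlib

/-- Edge-node incidence matrix of a digraph given by tail/head maps. -/
def incidence {E V : Type*} [DecidableEq V] (tail head : E → V) : Matrix E V ℚ :=
  fun e v => (if v = head e then 1 else 0) - (if v = tail e then 1 else 0)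

/-- The set `C̃_i = L̃_p ∪ L̃_q` of coarse vertices to which fine edge
`i = (p,q)` contributes. -/
def Ctil {Eh Vh VH : Type*} (tail head : Eh → Vh) (L : VH → Set Vh)
    (i : Eh) (n : VH) : Prop :=
  tail i ∈ L n ∨ head i ∈ L n

/-- One step of the undirected adjacency relation inside the subgraph of the
coarse graph induced by the vertex set `P`. -/
def inducedAdj {EH VH : Type*} (tailH headH : EH → VH) (P : VH → Prop)
    (a b : VH) : Prop :=
  P a ∧ P b ∧ ∃ e : EH, (tailH e = a ∧ headH e = b) ∨ (tailH e = b ∧ headH e = a)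


lemma pathflow {EH VH : Type*} [Fintype EH] [DecidableEq EH] [DecidableEq VH]
    (tailH headH : EH → VH) (P : VH → Prop) {a b : VH}
    (h : Relation.ReflTransGen (inducedAdj tailH headH P) a b) :
    ∃ f : EH → ℚ, (∀ e, ¬(P (tailH e) ∧ P (headH e)) → f e = 0) ∧
      ∀ n, ∑ e, f e * ((if n = headH e then 1 else 0) - (if n = tailH e then 1 else 0))
        = (if n = b then 1 else 0) - (if n = a then 1 else 0) := by
  induction h with
  | refl => exact ⟨0, fun e _ => rfl, fun n => by simp⟩
  | @tail c b hac hcb ih =>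
    obtain ⟨f, hs, hd⟩ := ih
    obtain ⟨hPc, hPb, e, he⟩ := hcb
    rcases he with ⟨ht, hh⟩ | ⟨ht, hh⟩
    · refine ⟨fun e' => f e' + (if e' = e then 1 else 0), ?_, ?_⟩
      · intro e' hne
        show f e' + _ = 0
        rw [hs e' hne, if_neg, add_zero]
        rintro rfl; exact hne ⟨ht ▸ hPc, hh ▸ hPb⟩
      · intro n
        simp only [add_mul, Finset.sum_add_distrib, hd, ite_mul, one_mul, zero_mul,
          Finset.sum_ite_eq' Finset.univ e, Finset.mem_univ, if_true, ht, hh]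
        ring
    · refine ⟨fun e' => f e' + (if e' = e then -1 else 0), ?_, ?_⟩
      · intro e' hne
        show f e' + _ = 0
        rw [hs e' hne, if_neg, add_zero]
        rintro rfl; exact hne ⟨ht ▸ hPb, hh ▸ hPc⟩
      · intro n
        simp only [add_mul, Finset.sum_add_distrib, hd, ite_mul, neg_mul, one_mul, zero_mul,
          Finset.sum_ite_eq' Finset.univ e, Finset.mem_univ, if_true, ht, hh]
        ring

lemma flow_of_sum_zero {EH VH : Type*} [Fintype EH] [DecidableEq EH]
    [Fintype VH] [DecidableEq VH]
    (tailH headH : EH → VH) (P : VH → Prop)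
    (hconn : ∀ m n, P m → P n → Relation.ReflTransGen (inducedAdj tailH headH P) m n)
    (r : VH → ℚ) (hr : ∀ n, ¬ P n → r n = 0) (hsum : ∑ n, r n = 0) :
    ∃ f : EH → ℚ, (∀ e, ¬(P (tailH e) ∧ P (headH e)) → f e = 0) ∧
      ∀ n, ∑ e, f e * ((if n = headH e then 1 else 0) - (if n = tailH e then 1 else 0))
        = r n := by
  classical
  by_cases hz : ∀ n, r n = 0
  · exact ⟨0, fun _ _ => rfl, fun n => by simp [hz]⟩
  push_neg at hz
  obtain ⟨v0, hv0⟩ := hz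
  have hPv0 : P v0 := by_contra fun h => hv0 (hr v0 h)
  choose g hg1 hg2 using fun (n : VH) (hPn : P n) =>
    pathflow tailH headH P (hconn v0 n hPv0 hPn)
  set F : VH → EH → ℚ := fun n => if h : P n then g n h else 0 with hF
  have hF1 : ∀ n e, ¬(P (tailH e) ∧ P (headH e)) → F n e = 0 := by
    intro n e he
    by_cases h : P n
    · simp only [hF, dif_pos h]; exact hg1 n h e he
    · simp [hF, dif_neg h]
  have hF2 : ∀ n m, r n * (∑ e, F n e *
      ((if m = headH e then 1 else 0) - (if m = tailH e then 1 else 0)))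
      = r n * ((if m = n then 1 else 0) - (if m = v0 then 1 else 0)) := by
    intro n m
    by_cases h : P n
    · simp only [hF, dif_pos h, hg2 n h m]
    · simp [hr n h]
  refine ⟨fun e => ∑ n, r n * F n e, ?_, ?_⟩
  · intro e he
    exact Finset.sum_eq_zero fun n _ => by rw [hF1 n e he, mul_zero]
  · intro m
    calc ∑ e, (∑ n, r n * F n e) *
          ((if m = headH e then 1 else 0) - (if m = tailH e then 1 else 0))
        = ∑ n, r n * (∑ e, F n e *
          ((if m = headH e then 1 else 0) - (if m = tailH e then 1 else 0))) := by
          simp only [Finset.sum_mul]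
          rw [Finset.sum_comm]
          simp only [Finset.mul_sum, mul_assoc]
      _ = ∑ n, r n * ((if m = n then 1 else 0) - (if m = v0 then 1 else 0)) := by
          exact Finset.sum_congr rfl fun n _ => hF2 n m
      _ = r m := by
          simp only [mul_sub, Finset.sum_sub_distrib, mul_ite, mul_one, mul_zero,
            Finset.sum_ite_eq Finset.univ m r, Finset.mem_univ, if_true]
          by_cases h : m = v0 <;> simp [h, hsum]


/-- sufficiency: if for every fine edge `i` the subgraph of the
coarse graph induced on `C̃_i` is connected, then for every admissible `α`
there is a matrix `β`, supported on the sets `Ĩ_i`, with `Gʰ α = β Gᴴ`. -/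
theorem exists_beta_of_connected {Eh Vh EH VH : Type*}
    [Fintype Vh] [DecidableEq Vh] [Fintype EH] [Fintype VH] [DecidableEq VH]
    (tail head : Eh → Vh) (tailH headH : EH → VH)
    (L : VH → Set Vh) (α : Matrix Vh VH ℚ)
    (hpart : ∀ p : Vh, ∑ n : VH, α p n = 1)
    (hsupp : ∀ (p : Vh) (n : VH), p ∉ L n → α p n = 0)
    (hconn : ∀ (i : Eh) (m n : VH),
      Ctil tail head L i m → Ctil tail head L i n →
      Relation.ReflTransGen (inducedAdj tailH headH (Ctil tail head L i)) m n) :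
    ∃ β : Matrix Eh EH ℚ,
      (∀ (i : Eh) (e : EH),
        ¬(Ctil tail head L i (tailH e) ∧ Ctil tail head L i (headH e)) → β i e = 0) ∧
      incidence tail head * α = β * incidence tailH headH := by

  classical
  have key : ∀ i : Eh, ∃ f : EH → ℚ,
      (∀ e, ¬(Ctil tail head L i (tailH e) ∧ Ctil tail head L i (headH e)) → f e = 0) ∧
      ∀ n, ∑ e, f e * ((if n = headH e then 1 else 0) - (if n = tailH e then 1 else 0))
        = α (head i) n - α (tail i) n := by
    intro i
    apply flow_of_sum_zero tailH headH (Ctil tail head L i) (hconn i)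
    · intro n hn
      simp only [Ctil, not_or] at hn
      rw [hsupp _ _ hn.1, hsupp _ _ hn.2, sub_zero]
    · simp [Finset.sum_sub_distrib, hpart]
  choose β hβ1 hβ2 using key
  refine ⟨fun i => β i, hβ1, ?_⟩
  ext i n
  simp only [Matrix.mul_apply]
  have : ∑ p, incidence tail head i p * α p n = α (head i) n - α (tail i) n := by
    simp [incidence, sub_mul, Finset.sum_sub_distrib, ite_mul,
      Finset.sum_ite_eq Finset.univ]
  rw [this, ← hβ2 i n]
  exact (Finset.sum_congr rfl fun e _ => by simp [incidence]).symm
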